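/- Let S be a string of length n over a nonempty finite alphabet Σ. Then the set of branching-σ-words of S is finite, and |Σ| multiplied by the number of branching-σ-words of S is at most n (i.e., the number of branching-σ-words is at most n/|Σ|). -/

import Mathlib

/-- `occ S w`: the number of indices `i` with `0 ≤ i < |S|` such that `w` is a prefix
of the suffix of `S` starting at position `i`. -/
def occ {α : Type*} [DecidableEq α] (S w : List α) : ℕ :=
  ((Finset.range S.length).filter (fun i => w <+: S.drop i)).card

/-- `w` is a σ-word of `S` if `occ S w ≥ |Σ|`. -/
def SigmaWord {α : Type*} [DecidableEq α] [Fintype α] (S w : List α) : Prop :=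
  Fintype.card α ≤ occ S w

/-- `w` is a branching-σ-word of `S` if two distinct one-character extensions of `w`
are σ-words of `S`. -/
def BranchingSigmaWord {α : Type*} [DecidableEq α] [Fintype α] (S w : List α) : Prop :=
  ∃ a b : α, a ≠ b ∧ SigmaWord S (w ++ [a]) ∧ SigmaWord S (w ++ [b])

section Aux

variable {α : Type*} [DecidableEq α] [Fintype α] [Nonempty α]

instance (S w : List α) : Decidable (SigmaWord S w) :=
  inferInstanceAs (Decidable (_ ≤ _))

instance (S w : List α) : Decidable (BranchingSigmaWord S w) :=
  inferInstanceAs (Decidable (∃ a b : α, a ≠ b ∧ SigmaWord S (w ++ [a]) ∧ SigmaWord S (w ++ [b])))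

/-- The occurrence set of `w` in `S`. -/
def occF (S w : List α) : Finset ℕ :=
  (Finset.range S.length).filter (fun i => w <+: S.drop i)

lemma occ_eq (S w : List α) : occ S w = (occF S w).card := rfl

lemma occ_mono (S : List α) {w v : List α} (h : w <+: v) : occ S v ≤ occ S w := by
  apply Finset.card_le_card
  intro i hi
  simp only [occF, Finset.mem_filter] at *
  exact ⟨hi.1, h.trans hi.2⟩

lemma exists_occ {S w : List α} (h : SigmaWord S w) : ∃ i < S.length, w <+: S.drop i := by
  have h0 : 0 < (occF S w).card := lt_of_lt_of_le Fintype.card_pos h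
  obtain ⟨i, hi⟩ := Finset.card_pos.mp h0
  simp only [occF, Finset.mem_filter, Finset.mem_range] at hi
  exact ⟨i, hi.1, hi.2⟩

lemma sigma_sublist {S w : List α} (h : SigmaWord S w) : w.Sublist S := by
  obtain ⟨i, _, hp⟩ := exists_occ h
  exact hp.sublist.trans (List.drop_sublist _ _)

lemma sigma_length {S w : List α} (h : SigmaWord S w) : w.length ≤ S.length :=
  (sigma_sublist h).length_le

/-- The finset of maximal σ-words of `S`. -/
def Msf (S : List α) : Finset (List α) :=
  S.sublists.toFinset.filter (fun m => SigmaWord S m ∧ ∀ a, ¬ SigmaWord S (m ++ [a]))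

lemma mem_Msf {S m : List α} :
    m ∈ Msf S ↔ m.Sublist S ∧ SigmaWord S m ∧ ∀ a, ¬ SigmaWord S (m ++ [a]) := by
  simp [Msf, List.mem_toFinset, List.mem_sublists]

lemma exists_max (S : List α) (w : List α) (h : SigmaWord S w) :
    ∃ m ∈ Msf S, w <+: m := by
  by_cases hm : ∀ a, ¬ SigmaWord S (w ++ [a])
  · exact ⟨w, mem_Msf.mpr ⟨sigma_sublist h, h, hm⟩, List.prefix_rfl⟩
  · push_neg at hm
    obtain ⟨a, ha⟩ := hm
    obtain ⟨m, hmM, hp⟩ := exists_max S (w ++ [a]) ha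
    exact ⟨m, hmM, (List.prefix_append w [a]).trans hp⟩
termination_by S.length + 1 - w.length
decreasing_by
  have := sigma_length ha
  simp only [List.length_append, List.length_cons, List.length_nil] at *
  omega

lemma eq_of_prefix_Msf {S m1 m2 : List α} (h1 : m1 ∈ Msf S) (h2 : m2 ∈ Msf S)
    (hp : m1 <+: m2) : m1 = m2 := by
  obtain ⟨t, rfl⟩ := hp
  cases t with
  | nil => simp
  | cons c t' =>
    exfalso
    have hmax := (mem_Msf.mp h1).2.2 c
    have hσ : SigmaWord S (m1 ++ c :: t') := (mem_Msf.mp h2).2.1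
    have : SigmaWord S (m1 ++ [c]) :=
      le_trans hσ (occ_mono S ⟨t', by simp⟩)
    exact hmax this

lemma mul_card_Msf (S : List α) : Fintype.card α * (Msf S).card ≤ S.length := by
  have hdisj : ∀ m1 ∈ Msf S, ∀ m2 ∈ Msf S, m1 ≠ m2 → Disjoint (occF S m1) (occF S m2) := by
    intro m1 h1 m2 h2 hne
    rw [Finset.disjoint_left]
    intro i hi1 hi2
    simp only [occF, Finset.mem_filter] at hi1 hi2
    rcases List.prefix_or_prefix_of_prefix hi1.2 hi2.2 with h | h
    · exact hne (eq_of_prefix_Msf h1 h2 h)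
    · exact hne (eq_of_prefix_Msf h2 h1 h).symm
  calc Fintype.card α * (Msf S).card
      = ∑ _m ∈ Msf S, Fintype.card α := by rw [Finset.sum_const, smul_eq_mul, mul_comm]
    _ ≤ ∑ m ∈ Msf S, (occF S m).card := by
        refine Finset.sum_le_sum fun m hm => ?_
        have := (mem_Msf.mp hm).2.1
        rwa [SigmaWord, occ_eq] at this
    _ = ((Msf S).biUnion (occF S)).card := (Finset.card_biUnion hdisj).symm
    _ ≤ (Finset.range S.length).card :=
        Finset.card_le_card (Finset.biUnion_subset.mpr fun m _ => Finset.filter_subset _ _)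
    _ = S.length := Finset.card_range _

lemma lex_lt {β : Type*} [LinearOrder β] (p : List β) {x y : β} (u v : List β) (h : x < y) :
    p ++ x :: u < p ++ y :: v := by
  induction p with
  | nil => exact List.Lex.rel h
  | cons c p ih => exact List.Lex.cons ih

end Aux

theorem stmt_0 {α : Type*} [DecidableEq α] [Fintype α] [Nonempty α] (S : List α) :
    {w : List α | BranchingSigmaWord S w}.Finite ∧
    Fintype.card α * {w : List α | BranchingSigmaWord S w}.ncard ≤ S.length := by
  classical
  set Bsf : Finset (List α) :=
    S.sublists.toFinset.filter (fun w => BranchingSigmaWord S w) with hBsf_def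
  have hbr_sub : ∀ w : List α, BranchingSigmaWord S w → w.Sublist S := by
    rintro w ⟨a, b, hne, ha, hb⟩
    exact (List.prefix_append w [a]).sublist.trans (sigma_sublist ha)
  have hset : {w : List α | BranchingSigmaWord S w} = ↑Bsf := by
    ext w
    simp only [Set.mem_setOf_eq, hBsf_def, Finset.coe_filter, List.mem_toFinset,
      List.mem_sublists, Set.mem_setOf_eq]
    exact ⟨fun h => ⟨hbr_sub w h, h⟩, fun h => h.2⟩
  -- the injection into maximal σ-words
  let f : α → ℕ := fun a => (Fintype.equivFin α a : ℕ)
  have hf_inj : Function.Injective f := fun a b h =>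
    (Fintype.equivFin α).injective (Fin.val_injective h)
  -- property of the chosen image
  let P : List α → List α → Prop := fun w m =>
    m ∈ Msf S ∧ ∃ b : α, SigmaWord S (w ++ [b]) ∧ (∃ a : α, f a < f b ∧ SigmaWord S (w ++ [a])) ∧
      (w ++ [b]) <+: m ∧ ∀ m' ∈ Msf S, (w ++ [b]) <+: m' → m.map f ≤ m'.map f
  have hex : ∀ w ∈ Bsf, ∃ m, P w m := by
    intro w hw
    have hwB : BranchingSigmaWord S w := (Finset.mem_filter.mp hw).2
    obtain ⟨a, b, hne, ha, hb⟩ := hwB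
    have hfa : f a ≠ f b := fun h => hne (hf_inj h)
    -- order so that the "b" has larger f-value
    obtain ⟨a, b, hab, ha, hb⟩ :
        ∃ a b : α, f a < f b ∧ SigmaWord S (w ++ [a]) ∧ SigmaWord S (w ++ [b]) := by
      rcases lt_or_gt_of_ne hfa with h | h
      · exact ⟨a, b, h, ha, hb⟩
      · exact ⟨b, a, h, hb, ha⟩
    set T : Finset (List α) := (Msf S).filter (fun m => (w ++ [b]) <+: m) with hT
    have hTne : T.Nonempty := by
      obtain ⟨m, hm, hp⟩ := exists_max S (w ++ [b]) hb
      exact ⟨m, Finset.mem_filter.mpr ⟨hm, hp⟩⟩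
    obtain ⟨m, hmT, hmin⟩ := T.exists_min_image (fun m => m.map f) hTne
    have hm1 := Finset.mem_filter.mp hmT
    refine ⟨m, hm1.1, b, hb, ⟨a, hab, ha⟩, hm1.2, ?_⟩
    intro m' hm' hp'
    exact hmin m' (Finset.mem_filter.mpr ⟨hm', hp'⟩)
  let F : List α → List α := fun w => if h : ∃ m, P w m then h.choose else []
  have hFP : ∀ w ∈ Bsf, P w (F w) := by
    intro w hw
    have h := hex w hw
    simp only [F, dif_pos h]
    exact h.choose_spec
  -- key: F is length-monotone-injective
  have aux : ∀ w1 ∈ Bsf, ∀ w2 ∈ Bsf, F w1 = F w2 → w1.length < w2.length → False := by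
    intro w1 hw1 w2 hw2 heq hlen
    obtain ⟨hm1M, b1, hb1, _, hp1, hmin1⟩ := hFP w1 hw1
    obtain ⟨hm2M, b2, hb2, ⟨a2, ha2b2, ha2⟩, hp2, _⟩ := hFP w2 hw2
    rw [heq] at hp1 hmin1
    set m := F w2
    -- w1 ++ [b1] is a prefix of w2
    have hw2p : w2 <+: m := (List.prefix_append w2 [b2]).trans hp2
    have hpre : (w1 ++ [b1]) <+: w2 := by
      apply List.prefix_of_prefix_length_le hp1 hw2p
      simp only [List.length_append, List.length_cons, List.length_nil]
      omega
    -- a maximal word above w2 ++ [a2]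
    obtain ⟨m', hm'M, hp'⟩ := exists_max S (w2 ++ [a2]) ha2
    have hpre' : (w1 ++ [b1]) <+: m' :=
      hpre.trans ((List.prefix_append w2 [a2]).trans hp')
    have hle : m.map f ≤ m'.map f := hmin1 m' hm'M hpre'
    -- but m'.map f < m.map f lexicographically
    obtain ⟨t, ht⟩ := hp2
    obtain ⟨t', ht'⟩ := hp'
    have hlt : m'.map f < m.map f := by
      rw [← ht, ← ht']
      simp only [List.map_append, List.map_cons, List.map_nil, List.append_assoc,
        List.cons_append, List.nil_append]
      exact lex_lt (w2.map f) _ _ ha2b2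
    exact absurd (lt_of_lt_of_le hlt hle) (lt_irrefl _)
  have hinj : Set.InjOn F ↑Bsf := by
    intro w1 hw1 w2 hw2 heq
    rcases lt_trichotomy w1.length w2.length with h | h | h
    · exact absurd (aux w1 hw1 w2 hw2 heq h) id
    · -- equal lengths: w1 ++ [b1] = w2 ++ [b2] as prefixes of m of equal length
      obtain ⟨_, b1, _, _, hp1, _⟩ := hFP w1 hw1
      obtain ⟨_, b2, _, _, hp2, _⟩ := hFP w2 hw2
      rw [heq] at hp1
      have hlen : (w1 ++ [b1]).length = (w2 ++ [b2]).length := by simp [h]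
      have := List.IsPrefix.eq_of_length
        (List.prefix_of_prefix_length_le hp1 hp2 (le_of_eq hlen)) hlen
      exact (List.append_inj' this (by simp)).1
    · exact absurd (aux w2 hw2 w1 hw1 heq.symm h) id
  have hcard : Bsf.card ≤ (Msf S).card := by
    apply Finset.card_le_card_of_injOn F (fun w hw => (hFP w hw).1)
    exact hinj
  refine ⟨?_, ?_⟩
  · rw [hset]; exact Bsf.finite_toSet
  · rw [hset, Set.ncard_coe_finset]
    calc Fintype.card α * Bsf.card ≤ Fintype.card α * (Msf S).card :=
          Nat.mul_le_mul_left _ hcard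
      _ ≤ S.length := mul_card_Msf S
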